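/- The set Z of trivalent trees in (X_2, d_2) has infinite Hausdorff dimension: dim_H(Z) = ∞. -/

import Mathlib

open Filter
open scoped ENNReal

noncomputable section

namespace GraphTrees

/-- The word length of an element of a free group: the length of its reduced word. -/
def wlen {n : ℕ} (g : FreeGroup (Fin n)) : ℕ := (FreeGroup.toWord g).length

/-- `h` is a prefix of `g`. -/
def IsPref {n : ℕ} (h g : FreeGroup (Fin n)) : Prop :=
  wlen h + wlen (h⁻¹ * g) = wlen g

/-- Vertex sets of infinite connected subtrees of the Cayley graph of the free group on
`n` generators which contain the identity: subsets containing `1`, infinite, and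
prefix-closed. -/
def IsTree {n : ℕ} (S : Set (FreeGroup (Fin n))) : Prop :=
  1 ∈ S ∧ S.Infinite ∧ ∀ g ∈ S, ∀ h : FreeGroup (Fin n), IsPref h g → h ∈ S

/-- The space `X n` of pointed trees. -/
def X (n : ℕ) : Type := {S : Set (FreeGroup (Fin n)) // IsTree S}

variable {n : ℕ}

/-- The pattern `B_S(m)` of radius `m` of a pointed tree. -/
def ball (S : X n) (m : ℕ) : Set (FreeGroup (Fin n)) := {g ∈ S.1 | wlen g ≤ m}

/-- The set of radii on which two pointed trees have the same pattern. -/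
def agreeSet (S S' : X n) : Set ℕ := {m | ball S m = ball S' m}

/-- The ball metric on the space of pointed trees. -/
def tdist (S S' : X n) : ℝ :=
  letI := Classical.propDecidable (S = S')
  if S = S' then 0 else Real.exp (-((sSup (agreeSet S S') : ℕ) : ℝ))

theorem tdist_eq_of_ne {x y : X n} (h : x ≠ y) :
    tdist x y = Real.exp (-((sSup (agreeSet x y) : ℕ) : ℝ)) := by
  unfold tdist
  rw [if_neg h]

theorem ball_mono_eq {x y : X n} {k m : ℕ} (hkm : k ≤ m)
    (h : ball x m = ball y m) : ball x k = ball y k := by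
  ext g
  constructor
  · rintro ⟨hg, hlen⟩
    have hx : g ∈ ball x m := ⟨hg, hlen.trans hkm⟩
    rw [h] at hx
    exact ⟨hx.1, hlen⟩
  · rintro ⟨hg, hlen⟩
    have hy : g ∈ ball y m := ⟨hg, hlen.trans hkm⟩
    rw [← h] at hy
    exact ⟨hy.1, hlen⟩

theorem eq_of_agree_all {x y : X n} (h : ∀ m, ball x m = ball y m) : x = y := by
  apply Subtype.ext
  ext g
  constructor
  · intro hg
    have hx : g ∈ ball x (wlen g) := ⟨hg, le_rfl⟩
    rw [h] at hx
    exact hx.1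
  · intro hg
    have hy : g ∈ ball y (wlen g) := ⟨hg, le_rfl⟩
    rw [← h] at hy
    exact hy.1

theorem bddAbove_agreeSet {x y : X n} (h : x ≠ y) : BddAbove (agreeSet x y) := by
  by_contra hb
  refine h (eq_of_agree_all fun m => ?_)
  rcases not_bddAbove_iff.mp hb m with ⟨k, hk, hmk⟩
  exact ball_mono_eq hmk.le hk

theorem ball_zero (x : X n) : ball x 0 = {1} := by
  ext g
  simp only [ball, Set.mem_setOf_eq, Nat.le_zero, Set.mem_singleton_iff]
  constructor
  · rintro ⟨hg, hlen⟩
    exact FreeGroup.toWord_eq_nil_iff.mp (List.length_eq_zero_iff.mp hlen)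
  · rintro rfl
    exact ⟨x.2.1, by simp [wlen]⟩

theorem zero_mem_agreeSet (x y : X n) : (0 : ℕ) ∈ agreeSet x y := by
  show ball x 0 = ball y 0
  rw [ball_zero, ball_zero]

theorem tdist_nonneg (x y : X n) : 0 ≤ tdist x y := by
  rcases eq_or_ne x y with rfl | h
  · unfold tdist
    rw [if_pos rfl]
  · rw [tdist_eq_of_ne h]
    exact (Real.exp_pos _).le

theorem tdist_self (x : X n) : tdist x x = 0 := by
  unfold tdist
  rw [if_pos rfl]

theorem tdist_comm (x y : X n) : tdist x y = tdist y x := by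
  by_cases h : x = y
  · subst h; rfl
  · have hs : agreeSet x y = agreeSet y x := by
      ext m
      exact eq_comm
    rw [tdist_eq_of_ne h, tdist_eq_of_ne (Ne.symm h), hs]

theorem tdist_ultra (x y z : X n) : tdist x z ≤ max (tdist x y) (tdist y z) := by
  rcases eq_or_ne x z with rfl | hxz
  · exact le_max_of_le_left (by rw [tdist_self]; exact tdist_nonneg x y)
  rcases eq_or_ne x y with rfl | hxy
  · exact le_max_of_le_right le_rfl
  rcases eq_or_ne y z with rfl | hyz
  · exact le_max_of_le_left le_rfl
  have hbxy := bddAbove_agreeSet hxy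
  have hbyz := bddAbove_agreeSet hyz
  have hbxz := bddAbove_agreeSet hxz
  have hma : sSup (agreeSet x y) ∈ agreeSet x y :=
    Nat.sSup_mem ⟨0, zero_mem_agreeSet x y⟩ hbxy
  have hmb : sSup (agreeSet y z) ∈ agreeSet y z :=
    Nat.sSup_mem ⟨0, zero_mem_agreeSet y z⟩ hbyz
  have hmin : min (sSup (agreeSet x y)) (sSup (agreeSet y z)) ∈ agreeSet x z := by
    have h1 : ball x (min (sSup (agreeSet x y)) (sSup (agreeSet y z)))
        = ball y (min (sSup (agreeSet x y)) (sSup (agreeSet y z))) :=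
      ball_mono_eq (min_le_left _ _) hma
    have h2 : ball y (min (sSup (agreeSet x y)) (sSup (agreeSet y z)))
        = ball z (min (sSup (agreeSet x y)) (sSup (agreeSet y z))) :=
      ball_mono_eq (min_le_right _ _) hmb
    exact h1.trans h2
  have hle : min (sSup (agreeSet x y)) (sSup (agreeSet y z)) ≤ sSup (agreeSet x z) :=
    le_csSup hbxz hmin
  rw [tdist_eq_of_ne hxz, tdist_eq_of_ne hxy, tdist_eq_of_ne hyz]
  rcases le_total (sSup (agreeSet x y)) (sSup (agreeSet y z)) with hab | hab
  · refine le_max_of_le_left (Real.exp_le_exp.mpr ?_)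
    have h2 : ((sSup (agreeSet x y) : ℕ) : ℝ) ≤ ((sSup (agreeSet x z) : ℕ) : ℝ) := by
      exact_mod_cast (min_eq_left hab) ▸ hle
    linarith
  · refine le_max_of_le_right (Real.exp_le_exp.mpr ?_)
    have h2 : ((sSup (agreeSet y z) : ℕ) : ℝ) ≤ ((sSup (agreeSet x z) : ℕ) : ℝ) := by
      exact_mod_cast (min_eq_right hab) ▸ hle
    linarith

theorem tdist_triangle (x y z : X n) : tdist x z ≤ tdist x y + tdist y z :=
  (tdist_ultra x y z).trans
    (max_le (le_add_of_nonneg_right (tdist_nonneg y z))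
      (le_add_of_nonneg_left (tdist_nonneg x y)))

instance : MetricSpace (X n) where
  dist := tdist
  dist_self := tdist_self
  dist_comm := tdist_comm
  dist_triangle := tdist_triangle
  eq_of_dist_eq_zero := by
    intro x y h
    by_contra hne
    have h' : tdist x y = 0 := h
    rw [tdist_eq_of_ne hne] at h'
    exact (Real.exp_pos _).ne' h'

theorem dist_eq_tdist (x y : X n) : dist x y = tdist x y := rfl

/-- The translate `S · g` of a tree `S` by a vertex `g ∈ S`. -/
def translate {n : ℕ} (S : Set (FreeGroup (Fin n))) (g : FreeGroup (Fin n)) :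
    Set (FreeGroup (Fin n)) := (fun h => g⁻¹ * h) '' S

/-- The orbit `O(S) = {S · g : g ∈ S}` of a pointed tree under the pseudogroup action. -/
def orbit (S : X n) : Set (X n) := {S' | ∃ g ∈ S.1, S'.1 = translate S.1 g}

/-- A subset `Y ⊆ X n` is invariant under the pseudogroup action. -/
def Invariant (Y : Set (X n)) : Prop :=
  ∀ S ∈ Y, ∀ g ∈ S.1, ∀ S' : X n, S'.1 = translate S.1 g → S' ∈ Y

/-- `Λ(Z, m)`: the number of distinct patterns of radius `m` of trees in `Z`. -/
def Lam (Z : Set (X n)) (m : ℕ) : ℕ := ((fun S => ball S m) '' Z).ncard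

/-- The lower box dimension of a subset of the space of pointed trees. -/
def lowerBox (Z : Set (X n)) : ℝ≥0∞ :=
  Filter.liminf (fun m : ℕ => ENNReal.ofReal (Real.log (Lam Z m)) / (m : ℝ≥0∞)) Filter.atTop

/-- The upper box dimension of a subset of the space of pointed trees. -/
def upperBox (Z : Set (X n)) : ℝ≥0∞ :=
  Filter.limsup (fun m : ℕ => ENNReal.ofReal (Real.log (Lam Z m)) / (m : ℝ≥0∞)) Filter.atTop


/-- The set of trivalent trees in `X 2`: every vertex has exactly three neighbours. -/
def Ztri : Set (X 2) :=
  {S | ∀ g ∈ S.1, ({h ∈ S.1 | wlen (g⁻¹ * h) = 1} : Set (FreeGroup (Fin 2))).encard = 3}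


abbrev L2 := Fin 2 × Bool

def lA : L2 := (0, true)
def lA' : L2 := (0, false)
def lB : L2 := (1, true)
def lB' : L2 := (1, false)

/-- Reduced words. -/
def IsRed (L : List L2) : Prop := List.Chain' (fun a b => ¬(a.1 = b.1 ∧ a.2 = !b.2)) L

theorem reduce_eq_self : ∀ {L : List L2}, IsRed L → FreeGroup.reduce L = L
  | [], _ => rfl
  | (x :: L), h => by
    have ih : FreeGroup.reduce L = L := reduce_eq_self h.tail
    rw [FreeGroup.reduce.cons, ih]
    cases L with
    | nil => rfl
    | cons hd tl =>
      have := List.IsChain.rel h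
      show (if x.1 = hd.1 ∧ x.2 = !hd.2 then tl else x :: hd :: tl) = x :: hd :: tl
      rw [if_neg this]

theorem toWord_mk_isRed {L : List L2} (h : IsRed L) : (FreeGroup.mk L).toWord = L := by
  rw [FreeGroup.toWord_mk, reduce_eq_self h]

theorem isRed_of_sign {L : List L2} {s : Bool} (h : ∀ a ∈ L, a.2 = s) : IsRed L := by
  refine List.Pairwise.isChain (List.pairwise_of_forall_mem_list fun a ha b hb => ?_)
  rintro ⟨-, h2⟩
  rw [h a ha, h b hb] at h2
  simp at h2

theorem isRed_append_singleton {L : List L2} {z : L2} (h : IsRed L)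
    (hz : ∀ y ∈ L.getLast?, ¬(y.1 = z.1 ∧ y.2 = !z.2)) : IsRed (L ++ [z]) := by
  rw [IsRed, List.Chain', List.isChain_append]
  exact ⟨h, List.isChain_singleton _, fun y hy x hx => by
    simp only [List.head?_cons, Option.mem_def, Option.some.injEq] at hx
    exact hx ▸ hz y hy⟩

theorem head?_replicate_append (m : ℕ) (x : L2) (r : List L2) :
    (List.replicate m x ++ r).head? = if m = 0 then r.head? else some x := by
  cases m with
  | zero => simp
  | succ m => simp [List.replicate_succ]

theorem run_eq {x : L2} : ∀ {k k' : ℕ} {r r' : List L2},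
    List.replicate k x ++ r = List.replicate k' x ++ r' →
    r.head? ≠ some x → r'.head? ≠ some x → k = k' ∧ r = r'
  | 0, 0, r, r', h, _, _ => by simpa using h
  | 0, (k'+1), r, r', h, hr, _ => by
    simp only [List.replicate_succ, List.replicate_zero, List.nil_append, List.cons_append] at h
    exact absurd (by rw [h]; rfl) hr
  | (k+1), 0, r, r', h, _, hr' => by
    simp only [List.replicate_succ, List.replicate_zero, List.nil_append, List.cons_append] at h
    exact absurd (by rw [← h]; rfl) hr'
  | (k+1), (k'+1), r, r', h, hr, hr' => by
    simp only [List.replicate_succ, List.cons_append, List.cons.injEq, true_and] at h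
    obtain ⟨h1, h2⟩ := run_eq h hr hr'
    exact ⟨by omega, h2⟩

/-- The bit of the tree at corner `(k, m)` (`m ≥ 1`). -/
def bit (ω : ℕ → Bool) (k m : ℕ) : Bool := ω (Nat.pair k (m - 1))

/-- The words of the tree `T ω`. -/
def pat (ω : ℕ → Bool) (L : List L2) : Prop :=
  (∃ k m : ℕ, L = List.replicate k lB ++ List.replicate m lA) ∨
  (∃ (k m : ℕ) (u : List L2), 1 ≤ m ∧ (∀ x ∈ u, x.2 = bit ω k m) ∧
      L = List.replicate k lB ++ List.replicate m lA ++ ((1, bit ω k m) :: u)) ∨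
  (∃ u : List L2, (∀ x ∈ u, x.2 = false) ∧ L = lA' :: u)

theorem getLast?_append_replicate_pos {m : ℕ} (hm : 1 ≤ m) (x : L2) (l : List L2) :
    (l ++ List.replicate m x).getLast? = some x := by
  obtain ⟨m', rfl⟩ : ∃ m', m = m' + 1 := ⟨m - 1, by omega⟩
  rw [List.replicate_succ', ← List.append_assoc, List.getLast?_concat]

theorem pat_isRed {ω : ℕ → Bool} {L : List L2} (h : pat ω L) : IsRed L := by
  rcases h with ⟨k, m, rfl⟩ | ⟨k, m, u, hm, hu, rfl⟩ | ⟨u, hu, rfl⟩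
  · refine isRed_of_sign (s := true) fun a ha => ?_
    rcases List.mem_append.1 ha with h | h <;>
      rw [List.eq_of_mem_replicate h] <;> rfl
  · rcases Bool.eq_false_or_eq_true (bit ω k m) with hb | hb
    · refine isRed_of_sign (s := true) fun a ha => ?_
      rcases List.mem_append.1 ha with h | h
      · rcases List.mem_append.1 h with h' | h' <;>
          rw [List.eq_of_mem_replicate h'] <;> rfl
      · rcases List.mem_cons.1 h with h' | h'
        · rw [h']; exact hb
        · rw [hu a h', hb]
    · rw [IsRed, List.Chain', List.isChain_append]
      refine ⟨(isRed_of_sign (s := true) fun a ha => ?_ : IsRed _),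
        (isRed_of_sign (s := false) fun a ha => ?_ : IsRed _), fun y hy z hz => ?_⟩
      · rcases List.mem_append.1 ha with h | h <;>
          rw [List.eq_of_mem_replicate h] <;> rfl
      · rcases List.mem_cons.1 ha with h | h
        · rw [h, hb]
        · rw [hu a h, hb]
      · rw [getLast?_append_replicate_pos hm] at hy
        simp only [Option.mem_def, Option.some.injEq] at hy hz
        subst hy
        rw [List.head?_cons, Option.some.injEq] at hz
        rintro ⟨h1, -⟩
        rw [← hz] at h1
        exact absurd h1 (by simp [lA])
  · refine isRed_of_sign (s := false) fun a ha => ?_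
    rcases List.mem_cons.1 ha with h | h
    · rw [h]; rfl
    · exact hu a h


theorem lA_ne_lB : lA ≠ lB := by decide
theorem lA'_ne_lA : lA' ≠ lA := by decide
theorem lA'_ne_lB : lA' ≠ lB := by decide
theorem lB'_ne_lB : lB' ≠ lB := by decide

theorem head?_repA {m : ℕ} (hm : 1 ≤ m) (r : List L2) :
    (List.replicate m lA ++ r).head? = some lA := by
  rw [head?_replicate_append, if_neg (by omega)]

theorem head?_repA_ne_lB {m : ℕ} (r : List L2) (hr : r.head? ≠ some lB) :
    (List.replicate m lA ++ r).head? ≠ some lB := by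
  rw [head?_replicate_append]
  split
  · exact hr
  · simp only [ne_eq, Option.some.injEq]
    exact lA_ne_lB

theorem head?_rep_ne {x y : L2} (hxy : x ≠ y) (m : ℕ) :
    (List.replicate m x).head? ≠ some y := by
  cases m with
  | zero => simp
  | succ m =>
    rw [List.replicate_succ, List.head?_cons]
    simp only [ne_eq, Option.some.injEq]
    exact hxy

theorem head?_repA_pos_ne {m : ℕ} (hm : 1 ≤ m) (r : List L2) :
    (List.replicate m lA ++ r).head? ≠ some lB := by
  rw [head?_repA hm]
  simp only [ne_eq, Option.some.injEq]
  exact lA_ne_lB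

theorem head?_cons_ne {c x : L2} (hcx : c ≠ x) (u : List L2) :
    (c :: u).head? ≠ some x := by
  simp only [List.head?_cons, ne_eq, Option.some.injEq]
  exact hcx

theorem fst_ne_of_fst {c x : L2} (h1 : c.1 = 1) (h0 : x.1 = 0) : c ≠ x := by
  intro h; rw [h, h0] at h1; exact absurd h1 (by decide)

theorem pat2_iff {ω : ℕ → Bool} {k m : ℕ} {c : L2} {u : List L2} (hm : 1 ≤ m) (hc : c.1 = 1) :
    pat ω (List.replicate k lB ++ List.replicate m lA ++ c :: u) ↔
      c.2 = bit ω k m ∧ ∀ x ∈ u, x.2 = bit ω k m := by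
  constructor
  · intro h
    rcases h with ⟨k', m', he⟩ | ⟨k', m', u', hm', hu', he⟩ | ⟨u', hu', he⟩
    · rw [List.append_assoc] at he
      obtain ⟨-, he2⟩ := run_eq he
        (head?_repA_pos_ne hm _)
        (head?_rep_ne lA_ne_lB m')
      obtain ⟨-, he3⟩ := run_eq (r' := ([] : List L2)) (by rw [List.append_nil]; exact he2)
        (head?_cons_ne (fst_ne_of_fst hc rfl) u) (by simp)
      exact absurd he3 (List.cons_ne_nil c u)
    · rw [List.append_assoc, List.append_assoc] at he
      obtain ⟨hk, he2⟩ := run_eq he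
        (head?_repA_pos_ne hm _)
        (head?_repA_pos_ne hm' _)
      obtain ⟨hmm, he3⟩ := run_eq he2
        (head?_cons_ne (fst_ne_of_fst hc rfl) u)
        (head?_cons_ne (fst_ne_of_fst rfl rfl) u')
      rw [List.cons.injEq] at he3
      obtain ⟨hcc, huu⟩ := he3
      subst hk; subst hmm
      refine ⟨by rw [hcc], fun x hx => ?_⟩
      rw [huu] at hx
      exact hu' x hx
    · have h1 : (List.replicate k lB ++ List.replicate m lA ++ c :: u).head? = some lA' := by
        rw [he]; rfl
      rw [List.append_assoc, head?_replicate_append] at h1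
      split at h1
      · rw [head?_repA hm, Option.some.injEq] at h1
        exact absurd h1.symm lA'_ne_lA
      · rw [Option.some.injEq] at h1
        exact absurd h1.symm lA'_ne_lB
  · rintro ⟨h1, h2⟩
    refine Or.inr (Or.inl ⟨k, m, u, hm, h2, ?_⟩)
    have : c = (1, bit ω k m) := by
      rw [← h1, ← hc]
    rw [← this]

theorem not_pat_B' (ω : ℕ → Bool) : ¬ pat ω [lB'] := by
  rintro (⟨k, m, he⟩ | ⟨k, m, u, hm, hu, he⟩ | ⟨u, hu, he⟩)
  · have : lB' ∈ List.replicate k lB ++ List.replicate m lA := by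
      rw [← he]; exact List.mem_singleton_self _
    rcases List.mem_append.1 this with h | h <;>
      exact absurd (List.eq_of_mem_replicate h) (by decide)
  · have := congrArg List.length he
    simp only [List.length_cons, List.length_append, List.length_replicate,
      List.length_nil] at this
    omega
  · rw [List.cons.injEq] at he
    exact absurd he.1 (by decide)

theorem not_pat_Bk_A' (ω : ℕ → Bool) {k : ℕ} (hk : 1 ≤ k) :
    ¬ pat ω (List.replicate k lB ++ [lA']) := by
  rintro (⟨k', m', he⟩ | ⟨k', m', u', hm', hu', he⟩ | ⟨u', hu', he⟩)
  · have : lA' ∈ List.replicate k' lB ++ List.replicate m' lA := by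
      rw [← he]
      exact List.mem_append.2 (Or.inr (List.mem_singleton_self _))
    rcases List.mem_append.1 this with h | h <;>
      exact absurd (List.eq_of_mem_replicate h) (by decide)
  · rw [List.append_assoc] at he
    obtain ⟨-, he2⟩ := run_eq he (head?_cons_ne (by decide) _)
      (head?_repA_pos_ne hm' _)
    have := congrArg List.head? he2
    rw [head?_repA hm', List.head?_cons, Option.some.injEq] at this
    exact absurd this lA'_ne_lA
  · have := congrArg List.head? he
    obtain ⟨k'', rfl⟩ : ∃ k'', k = k'' + 1 := ⟨k - 1, by omega⟩
    rw [List.replicate_succ, List.cons_append, List.head?_cons, List.head?_cons,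
      Option.some.injEq] at this
    exact absurd this (by decide)

theorem not_pat_A'_u_z (ω : ℕ → Bool) {u : List L2} {z : L2}
    (hz : z.2 = true) : ¬ pat ω (lA' :: (u ++ [z])) := by
  rintro (⟨k', m', he⟩ | ⟨k', m', u', hm', hu', he⟩ | ⟨u', hu', he⟩)
  · have : lA' ∈ List.replicate k' lB ++ List.replicate m' lA := by
      rw [← he]; exact List.mem_cons_self
    rcases List.mem_append.1 this with h | h <;>
      exact absurd (List.eq_of_mem_replicate h) (by decide)
  · have := congrArg List.head? he
    rw [List.append_assoc, head?_replicate_append, List.head?_cons] at this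
    split at this
    · rw [head?_repA hm', Option.some.injEq] at this
      exact absurd this lA'_ne_lA
    · rw [Option.some.injEq] at this
      exact absurd this lA'_ne_lB
  · rw [List.cons.injEq] at he
    have : z.2 = false := hu' z (by rw [← he.2]; exact List.mem_append.2 (Or.inr (List.mem_singleton_self _)))
    rw [hz] at this
    exact absurd this (by decide)

theorem pat_take {ω : ℕ → Bool} {L : List L2} (h : pat ω L) (n : ℕ) : pat ω (L.take n) := by
  rcases h with ⟨k, m, rfl⟩ | ⟨k, m, u, hm, hu, rfl⟩ | ⟨u, hu, rfl⟩
  · rw [List.take_append, List.take_replicate, List.take_replicate]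
    exact Or.inl ⟨_, _, rfl⟩
  · rw [List.take_append]
    by_cases hn : n ≤ k + m
    · have h0 : n - (List.replicate k lB ++ List.replicate m lA).length = 0 := by
        simp only [List.length_append, List.length_replicate]; omega
      rw [h0, List.take_zero, List.append_nil, List.take_append,
        List.take_replicate, List.take_replicate]
      exact Or.inl ⟨_, _, rfl⟩
    · have hlen : (List.replicate k lB ++ List.replicate m lA).length = k + m := by
        simp
      rw [List.take_of_length_le (by omega), hlen]
      obtain ⟨j, hj⟩ : ∃ j, n - (k + m) = j + 1 := ⟨n - (k + m) - 1, by omega⟩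
      rw [hj, List.take_succ_cons]
      exact Or.inr (Or.inl ⟨k, m, _, hm, fun x hx => hu x (List.take_subset _ _ hx), rfl⟩)
  · cases n with
    | zero => exact Or.inl ⟨0, 0, rfl⟩
    | succ n' =>
      rw [List.take_succ_cons]
      exact Or.inr (Or.inr ⟨_, fun x hx => hu x (List.take_subset _ _ hx), rfl⟩)

/-- The vertex set of the tree coded by `ω`. -/
def TSet (ω : ℕ → Bool) : Set (FreeGroup (Fin 2)) := {g | pat ω g.toWord}

theorem mem_TSet_mk {ω : ℕ → Bool} {L : List L2} (hL : IsRed L) :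
    FreeGroup.mk L ∈ TSet ω ↔ pat ω L := by
  rw [TSet, Set.mem_setOf_eq, toWord_mk_isRed hL]

theorem mk_single_mul_cancel (y : L2) :
    FreeGroup.mk [y] * FreeGroup.mk [(y.1, !y.2)] = 1 := by
  have h : FreeGroup.mk [(y.1, !y.2)] = (FreeGroup.mk [y])⁻¹ := by
    rw [FreeGroup.inv_mk]; rfl
  rw [h, mul_inv_cancel]

theorem mk_cancel (L : List L2) (y : L2) :
    FreeGroup.mk (L ++ [y]) * FreeGroup.mk [(y.1, !y.2)] = FreeGroup.mk L := by
  rw [← FreeGroup.mul_mk, mul_assoc, mk_single_mul_cancel, mul_one]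

theorem isRed_replicate (n : ℕ) (x : L2) : IsRed (List.replicate n x) :=
  isRed_of_sign (s := x.2) fun a ha => by rw [List.eq_of_mem_replicate ha]

theorem isTree_TSet (ω : ℕ → Bool) : IsTree (TSet ω) := by
  refine ⟨?_, ?_, ?_⟩
  · show pat ω (1 : FreeGroup (Fin 2)).toWord
    rw [FreeGroup.toWord_one]
    exact Or.inl ⟨0, 0, rfl⟩
  · apply Set.infinite_of_injective_forall_mem
      (f := fun n : ℕ => FreeGroup.mk (List.replicate n lB))
    · intro n n' h
      have h2 := congrArg FreeGroup.toWord h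
      rw [toWord_mk_isRed (isRed_replicate _ _), toWord_mk_isRed (isRed_replicate _ _)] at h2
      simpa using congrArg List.length h2
    · intro n
      exact (mem_TSet_mk (isRed_replicate _ _)).2 (Or.inl ⟨n, 0, by simp⟩)
  · rintro g hg h hpref
    have hg' : g = FreeGroup.mk (h.toWord ++ (h⁻¹ * g).toWord) := by
      rw [← FreeGroup.mul_mk, FreeGroup.mk_toWord, FreeGroup.mk_toWord, mul_inv_cancel_left]
    have hred : FreeGroup.reduce (h.toWord ++ (h⁻¹ * g).toWord) = g.toWord := by
      conv_rhs => rw [hg']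
      rw [FreeGroup.toWord_mk]
    have hsub : List.Sublist g.toWord (h.toWord ++ (h⁻¹ * g).toWord) :=
      hred ▸ FreeGroup.Red.sublist FreeGroup.reduce.red
    have heq : g.toWord = h.toWord ++ (h⁻¹ * g).toWord :=
      hsub.eq_of_length (by rw [List.length_append]; exact hpref.symm)
    have hh : h.toWord = (g.toWord).take h.toWord.length := by
      rw [heq, List.take_left]
    show pat ω h.toWord
    rw [hh]
    exact pat_take hg _

/-- The tree coded by `ω` as a point of `X 2`. -/
def XT (ω : ℕ → Bool) : X 2 := ⟨TSet ω, isTree_TSet ω⟩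

theorem wlen_eq_one_iff {z : FreeGroup (Fin 2)} :
    wlen z = 1 ↔ ∃ x : L2, z = FreeGroup.mk [x] := by
  constructor
  · intro h
    obtain ⟨x, hx⟩ := List.length_eq_one_iff.1 h
    exact ⟨x, by rw [← FreeGroup.mk_toWord (x := z), hx]⟩
  · rintro ⟨x, rfl⟩
    rw [wlen, FreeGroup.toWord_mk, FreeGroup.reduce_singleton]
    rfl

theorem neighbors_eq (S : Set (FreeGroup (Fin 2))) (g : FreeGroup (Fin 2)) :
    ({h ∈ S | wlen (g⁻¹ * h) = 1} : Set (FreeGroup (Fin 2))) =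
      (fun x : L2 => g * FreeGroup.mk [x]) '' {x | g * FreeGroup.mk [x] ∈ S} := by
  ext h
  simp only [Set.mem_setOf_eq, Set.mem_image]
  constructor
  · rintro ⟨hS, h1⟩
    obtain ⟨x, hx⟩ := wlen_eq_one_iff.1 h1
    refine ⟨x, ?_, ?_⟩ <;> rw [← hx, mul_inv_cancel_left] <;> exact hS
  · rintro ⟨x, hx, rfl⟩
    refine ⟨hx, wlen_eq_one_iff.2 ⟨x, ?_⟩⟩
    rw [inv_mul_cancel_left]

theorem mul_mk_single_injective (g : FreeGroup (Fin 2)) :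
    Function.Injective (fun x : L2 => g * FreeGroup.mk [x]) := by
  intro x y h
  simp only at h
  have h2 := congrArg FreeGroup.toWord (mul_left_cancel h)
  rw [FreeGroup.toWord_mk, FreeGroup.toWord_mk, FreeGroup.reduce_singleton,
    FreeGroup.reduce_singleton] at h2
  simpa using h2

theorem encard_letters_compl (b : L2) : ({b}ᶜ : Set L2).encard = 3 := by
  have h := Set.encard_add_encard_compl ({b} : Set L2)
  rw [Set.encard_singleton, Set.encard_univ] at h
  have h4 : ENat.card L2 = 4 := by
    rw [ENat.card_eq_coe_fintype_card]
    rfl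
  rw [h4] at h
  have : (1 : ℕ∞) + ({b}ᶜ : Set L2).encard = 1 + 3 := by rw [h]; rfl
  exact WithTop.add_left_cancel (by simp : (1 : ℕ∞) ≠ ⊤) this

theorem eq_compl_singleton {N : Set L2} {b : L2}
    (hb : b ∉ N) (h : ∀ x : L2, x ≠ b → x ∈ N) : N = {b}ᶜ := by
  ext x
  simp only [Set.mem_compl_iff, Set.mem_singleton_iff]
  constructor
  · intro hx hxb
    exact hb (hxb ▸ hx)
  · exact h x

/-- The other generator index. -/
def oth (i : Fin 2) : Fin 2 := if i = 0 then 1 else 0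

theorem eq_oth_of_ne {i j : Fin 2} (h : j ≠ i) : j = oth i := by
  fin_cases i <;> fin_cases j <;> simp_all [oth]

theorem noCancel_last {L : List L2} {ℓ z : L2} (hlast : L.getLast? = some ℓ)
    (h : ℓ.1 ≠ z.1 ∨ ℓ.2 = z.2) : ∀ y ∈ L.getLast?, ¬(y.1 = z.1 ∧ y.2 = !z.2) := by
  rw [hlast]
  rintro y hy ⟨h1, h2⟩
  simp only [Option.mem_def, Option.some.injEq] at hy
  subst hy
  rcases h with h | h
  · exact h h1
  · rw [h] at h2; simp at h2

theorem mem_append_letter {ω : ℕ → Bool} {L : List L2} (hL : IsRed L) {z : L2}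
    (hz : ∀ y ∈ L.getLast?, ¬(y.1 = z.1 ∧ y.2 = !z.2)) :
    FreeGroup.mk L * FreeGroup.mk [z] ∈ TSet ω ↔ pat ω (L ++ [z]) := by
  rw [FreeGroup.mul_mk]
  exact mem_TSet_mk (isRed_append_singleton hL hz)

theorem ne_oth (i : Fin 2) : i ≠ oth i := by fin_cases i <;> decide

theorem fin2_cases (i : Fin 2) : i = 0 ∨ i = 1 := by fin_cases i <;> simp

theorem fst01 : (0 : Fin 2) ≠ 1 := by decide
theorem fst10 : (1 : Fin 2) ≠ 0 := by decide

theorem nbhd_root (ω : ℕ → Bool) :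
    {x : L2 | FreeGroup.mk ([] : List L2) * FreeGroup.mk [x] ∈ TSet ω} = {lB'}ᶜ := by
  apply eq_compl_singleton
  · rw [Set.mem_setOf_eq, mem_append_letter List.isChain_nil (by simp), List.nil_append]
    exact not_pat_B' ω
  · rintro ⟨i, s⟩ hxb
    rw [Set.mem_setOf_eq, mem_append_letter List.isChain_nil (by simp), List.nil_append]
    rcases fin2_cases i with rfl | rfl
    · cases s
      · exact Or.inr (Or.inr ⟨[], by simp, rfl⟩)
      · exact Or.inl ⟨0, 1, rfl⟩
    · cases s
      · exact absurd rfl hxb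
      · exact Or.inl ⟨1, 0, rfl⟩

theorem nbhd_T1 (ω : ℕ → Bool) {k : ℕ} (hk : 1 ≤ k) :
    {x : L2 | FreeGroup.mk (List.replicate k lB) * FreeGroup.mk [x] ∈ TSet ω} = {lA'}ᶜ := by
  have hkk : List.replicate k lB = List.replicate (k - 1) lB ++ [lB] := by
    conv_lhs => rw [show k = (k - 1) + 1 by omega, List.replicate_succ']
  have hlast : (List.replicate k lB).getLast? = some lB := by
    rw [hkk]; exact List.getLast?_concat
  apply eq_compl_singleton
  · rw [Set.mem_setOf_eq,
      mem_append_letter (z := lA') (isRed_replicate k lB) (noCancel_last hlast (Or.inl fst10))]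
    exact not_pat_Bk_A' ω hk
  · rintro ⟨i, s⟩ hxb
    rcases fin2_cases i with rfl | rfl
    · cases s
      · exact absurd rfl hxb
      · rw [Set.mem_setOf_eq,
          mem_append_letter (z := ((0 : Fin 2), true)) (isRed_replicate k lB)
            (noCancel_last hlast (Or.inl fst10))]
        exact Or.inl ⟨k, 1, rfl⟩
    · cases s
      · rw [Set.mem_setOf_eq, hkk,
          show (((1 : Fin 2), false) : L2) = (lB.1, !lB.2) from rfl, mk_cancel]
        exact (mem_TSet_mk (isRed_replicate _ _)).2 (Or.inl ⟨k - 1, 0, by simp⟩)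
      · rw [Set.mem_setOf_eq,
          mem_append_letter (z := ((1 : Fin 2), true)) (isRed_replicate k lB)
            (noCancel_last hlast (Or.inr rfl))]
        exact Or.inl ⟨k + 1, 0, by simp [List.replicate_succ', lB]⟩

theorem nbhd_T2 (ω : ℕ → Bool) {k m : ℕ} (hm : 1 ≤ m) :
    {x : L2 | FreeGroup.mk (List.replicate k lB ++ List.replicate m lA) * FreeGroup.mk [x]
      ∈ TSet ω} = {(((1 : Fin 2), !bit ω k m) : L2)}ᶜ := by
  have hp : pat ω (List.replicate k lB ++ List.replicate m lA) := Or.inl ⟨k, m, rfl⟩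
  have hred := pat_isRed hp
  have hlast : (List.replicate k lB ++ List.replicate m lA).getLast? = some lA :=
    getLast?_append_replicate_pos hm _ _
  have hsplit : List.replicate k lB ++ List.replicate m lA
      = (List.replicate k lB ++ List.replicate (m - 1) lA) ++ [lA] := by
    conv_lhs => rw [show m = (m - 1) + 1 by omega, List.replicate_succ']
    rw [List.append_assoc]
  apply eq_compl_singleton
  · rw [Set.mem_setOf_eq,
      mem_append_letter (z := ((1 : Fin 2), !bit ω k m)) hred
        (noCancel_last hlast (Or.inl fst01))]
    intro hcon
    exact Bool.not_ne_self _ ((pat2_iff hm rfl).1 hcon).1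
  · rintro ⟨i, s⟩ hxb
    rcases fin2_cases i with rfl | rfl
    · cases s
      · rw [Set.mem_setOf_eq, hsplit,
          show (((0 : Fin 2), false) : L2) = (lA.1, !lA.2) from rfl, mk_cancel]
        have hq : pat ω (List.replicate k lB ++ List.replicate (m - 1) lA) :=
          Or.inl ⟨k, m - 1, rfl⟩
        exact (mem_TSet_mk (pat_isRed hq)).2 hq
      · rw [Set.mem_setOf_eq,
          mem_append_letter (z := ((0 : Fin 2), true)) hred (noCancel_last hlast (Or.inr rfl))]
        exact Or.inl ⟨k, m + 1, by simp [List.replicate_succ', lA, List.append_assoc]⟩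
    · by_cases hs : s = bit ω k m
      · subst hs
        rw [Set.mem_setOf_eq,
          mem_append_letter (z := ((1 : Fin 2), bit ω k m)) hred
            (noCancel_last hlast (Or.inl fst01))]
        exact (pat2_iff hm rfl).2 ⟨rfl, by simp⟩
      · exact absurd (by rw [Bool.eq_not_of_ne hs]) hxb

theorem nbhd_T3 (ω : ℕ → Bool) {k m : ℕ} {u : List L2} (hm : 1 ≤ m)
    (hu : ∀ x ∈ u, x.2 = bit ω k m) {ℓ : L2}
    (hℓ : ((((1 : Fin 2), bit ω k m) : L2) :: u).getLast? = some ℓ) :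
    {x : L2 | FreeGroup.mk (List.replicate k lB ++ List.replicate m lA
        ++ (((1 : Fin 2), bit ω k m) : L2) :: u) * FreeGroup.mk [x] ∈ TSet ω}
      = {((oth ℓ.1, !bit ω k m) : L2)}ᶜ := by
  have hp : pat ω (List.replicate k lB ++ List.replicate m lA
      ++ (((1 : Fin 2), bit ω k m) : L2) :: u) := Or.inr (Or.inl ⟨k, m, u, hm, hu, rfl⟩)
  have hred := pat_isRed hp
  have hl2 : ℓ.2 = bit ω k m := by
    rcases List.mem_cons.1 (List.mem_of_mem_getLast? hℓ) with h | h
    · rw [h]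
    · exact hu ℓ h
  have hlast : (List.replicate k lB ++ List.replicate m lA
      ++ (((1 : Fin 2), bit ω k m) : L2) :: u).getLast? = some ℓ := by
    rw [List.getLast?_append_of_ne_nil _ (List.cons_ne_nil _ _)]
    exact hℓ
  apply eq_compl_singleton
  · rw [Set.mem_setOf_eq,
      mem_append_letter (z := (oth ℓ.1, !bit ω k m)) hred
        (noCancel_last hlast (Or.inl (ne_oth ℓ.1))),
      List.append_assoc, List.cons_append]
    intro hcon
    have h2 := ((pat2_iff hm rfl).1 hcon).2 (oth ℓ.1, !bit ω k m)
      (List.mem_append.2 (Or.inr (List.mem_singleton_self _)))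
    exact Bool.not_ne_self _ h2
  · rintro ⟨i, s⟩ hxb
    by_cases hs : s = bit ω k m
    · subst hs
      rw [Set.mem_setOf_eq,
        mem_append_letter (z := (i, bit ω k m)) hred (noCancel_last hlast (Or.inr hl2)),
        List.append_assoc, List.cons_append]
      refine (pat2_iff hm rfl).2 ⟨rfl, fun y hy => ?_⟩
      rcases List.mem_append.1 hy with h | h
      · exact hu y h
      · rw [List.mem_singleton.1 h]
    · by_cases hi : i = ℓ.1
      · subst hi
        have hx : ((ℓ.1, s) : L2) = (ℓ.1, !ℓ.2) := by rw [Bool.eq_not_of_ne hs, hl2]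
        rw [Set.mem_setOf_eq, hx]
        rcases List.eq_nil_or_concat u with rfl | ⟨u', y, rfl⟩
        · have hc : ((((1 : Fin 2), bit ω k m)) : L2) = ℓ := by simpa using hℓ
          rw [← hc, mk_cancel]
          have hq : pat ω (List.replicate k lB ++ List.replicate m lA) := Or.inl ⟨k, m, rfl⟩
          exact (mem_TSet_mk (pat_isRed hq)).2 hq
        · have hy : y = ℓ := by
            have h2 : ((((1 : Fin 2), bit ω k m) : L2) :: u'.concat y).getLast? = some y := by
              rw [List.concat_eq_append, ← List.cons_append, List.getLast?_concat]
            rw [h2, Option.some.injEq] at hℓ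
            exact hℓ
          have hp' : pat ω (List.replicate k lB ++ List.replicate m lA
              ++ (((1 : Fin 2), bit ω k m) : L2) :: u') :=
            Or.inr (Or.inl ⟨k, m, u', hm, fun x hx => hu x (by
              rw [List.concat_eq_append]
              exact List.mem_append.2 (Or.inl hx)), rfl⟩)
          rw [show (List.replicate k lB ++ List.replicate m lA
                ++ (((1 : Fin 2), bit ω k m) : L2) :: u'.concat y)
              = (List.replicate k lB ++ List.replicate m lA
                ++ (((1 : Fin 2), bit ω k m) : L2) :: u') ++ [ℓ] from by
            rw [List.concat_eq_append, ← hy]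
            simp [List.append_assoc], mk_cancel]
          exact (mem_TSet_mk (pat_isRed hp')).2 hp'
      · exact absurd (by rw [eq_oth_of_ne hi, Bool.eq_not_of_ne hs]) hxb

theorem nbhd_T4 (ω : ℕ → Bool) {u : List L2} (hu : ∀ x ∈ u, x.2 = false) {ℓ : L2}
    (hℓ : (lA' :: u).getLast? = some ℓ) :
    {x : L2 | FreeGroup.mk (lA' :: u) * FreeGroup.mk [x] ∈ TSet ω}
      = {((oth ℓ.1, true) : L2)}ᶜ := by
  have hp : pat ω (lA' :: u) := Or.inr (Or.inr ⟨u, hu, rfl⟩)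
  have hred := pat_isRed hp
  have hl2 : ℓ.2 = false := by
    rcases List.mem_cons.1 (List.mem_of_mem_getLast? hℓ) with h | h
    · rw [h]; rfl
    · exact hu ℓ h
  apply eq_compl_singleton
  · rw [Set.mem_setOf_eq,
      mem_append_letter (z := (oth ℓ.1, true)) hred (noCancel_last hℓ (Or.inl (ne_oth ℓ.1))),
      List.cons_append]
    exact not_pat_A'_u_z ω rfl
  · rintro ⟨i, s⟩ hxb
    cases s
    · rw [Set.mem_setOf_eq,
        mem_append_letter (z := (i, false)) hred (noCancel_last hℓ (Or.inr hl2)),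
        List.cons_append]
      refine Or.inr (Or.inr ⟨u ++ [(i, false)], fun y hy => ?_, rfl⟩)
      rcases List.mem_append.1 hy with h | h
      · exact hu y h
      · rw [List.mem_singleton.1 h]
    · by_cases hi : i = ℓ.1
      · subst hi
        have hx : ((ℓ.1, true) : L2) = (ℓ.1, !ℓ.2) := by rw [hl2]; rfl
        rw [Set.mem_setOf_eq, hx]
        rcases List.eq_nil_or_concat u with rfl | ⟨u', y, rfl⟩
        · have hc : (lA' : L2) = ℓ := by simpa using hℓ
          rw [show (lA' :: ([] : List L2)) = ([] : List L2) ++ [lA'] from rfl, ← hc, mk_cancel]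
          exact (mem_TSet_mk List.isChain_nil).2 (Or.inl ⟨0, 0, rfl⟩)
        · have hy : y = ℓ := by
            have h2 : (lA' :: u'.concat y).getLast? = some y := by
              rw [List.concat_eq_append, ← List.cons_append, List.getLast?_concat]
            rw [h2, Option.some.injEq] at hℓ
            exact hℓ
          have hp' : pat ω (lA' :: u') :=
            Or.inr (Or.inr ⟨u', fun x hx => hu x (by
              rw [List.concat_eq_append]
              exact List.mem_append.2 (Or.inl hx)), rfl⟩)
          rw [show (lA' :: u'.concat y) = (lA' :: u') ++ [ℓ] from by
            rw [List.concat_eq_append, ← hy, List.cons_append], mk_cancel]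
          exact (mem_TSet_mk (pat_isRed hp')).2 hp'
      · exact absurd (by rw [eq_oth_of_ne hi]) hxb

theorem XT_trivalent (ω : ℕ → Bool) (g : FreeGroup (Fin 2)) (hg : g ∈ TSet ω) :
    ({h ∈ TSet ω | wlen (g⁻¹ * h) = 1} : Set (FreeGroup (Fin 2))).encard = 3 := by
  rw [neighbors_eq, Set.InjOn.encard_image ((mul_mk_single_injective g).injOn)]
  have hgm : FreeGroup.mk g.toWord = g := FreeGroup.mk_toWord
  have hp : pat ω g.toWord := hg
  rcases hp with ⟨k, m, hL⟩ | ⟨k, m, u, hm, hu, hL⟩ | ⟨u, hu, hL⟩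
  · rcases Nat.eq_zero_or_pos m with rfl | hm
    · rw [List.replicate_zero, List.append_nil] at hL
      rcases Nat.eq_zero_or_pos k with rfl | hk
      · rw [List.replicate_zero] at hL
        rw [← hgm, hL, nbhd_root ω, encard_letters_compl]
      · rw [← hgm, hL, nbhd_T1 ω hk, encard_letters_compl]
    · rw [← hgm, hL, nbhd_T2 ω hm, encard_letters_compl]
  · have hℓ := List.getLast?_eq_getLast (l := (((1 : Fin 2), bit ω k m) : L2) :: u)
      (List.cons_ne_nil _ _)
    rw [← hgm, hL, nbhd_T3 ω hm hu hℓ, encard_letters_compl]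
  · have hℓ := List.getLast?_eq_getLast (l := lA' :: u) (List.cons_ne_nil _ _)
    rw [← hgm, hL, nbhd_T4 ω hu hℓ, encard_letters_compl]

theorem XT_mem_Ztri (ω : ℕ → Bool) : XT ω ∈ Ztri := fun g hg => XT_trivalent ω g hg

/-- The word coding the bit of index `j`. -/
def idxWord (j : ℕ) : List L2 :=
  List.replicate (Nat.unpair j).1 lB ++ List.replicate ((Nat.unpair j).2 + 1) lA ++ [lB]

theorem isRed_idxWord (j : ℕ) : IsRed (idxWord j) := by
  refine isRed_of_sign (s := true) fun a ha => ?_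
  rcases List.mem_append.1 ha with h | h
  · rcases List.mem_append.1 h with h' | h' <;> rw [List.eq_of_mem_replicate h'] <;> rfl
  · rw [List.mem_singleton.1 h]; rfl

/-- The group element coding the bit of index `j`. -/
def gIdx (j : ℕ) : FreeGroup (Fin 2) := FreeGroup.mk (idxWord j)

theorem wlen_gIdx (j : ℕ) : wlen (gIdx j) = (Nat.unpair j).1 + (Nat.unpair j).2 + 2 := by
  rw [wlen, gIdx, toWord_mk_isRed (isRed_idxWord j), idxWord]
  simp only [List.length_append, List.length_replicate, List.length_cons, List.length_nil]
  omega

theorem gIdx_mem_TSet (ω : ℕ → Bool) (j : ℕ) : gIdx j ∈ TSet ω ↔ ω j = true := by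
  rw [gIdx, mem_TSet_mk (isRed_idxWord j), idxWord,
    pat2_iff (Nat.le_add_left 1 _) rfl]
  have hb : bit ω (Nat.unpair j).1 ((Nat.unpair j).2 + 1) = ω j := by
    rw [bit, Nat.add_sub_cancel, Nat.pair_unpair]
  rw [hb]
  constructor
  · rintro ⟨h1, -⟩
    exact h1.symm
  · intro h
    exact ⟨h.symm, by simp⟩

theorem sq_max_le_pair (a b : ℕ) : max a b * max a b ≤ Nat.pair a b := by
  rw [Nat.pair]
  rcases lt_or_ge a b with h | h
  · rw [if_pos h, max_eq_right h.le]; exact Nat.le_add_right _ _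
  · rw [if_neg (not_lt.2 h), max_eq_left h, add_assoc]; exact Nat.le_add_right _ _

theorem wlen_gIdx_le {j r : ℕ} (hj : j < (r - 1) / 2 * ((r - 1) / 2)) :
    wlen (gIdx j) ≤ r := by
  by_contra hcon
  push_neg at hcon
  rw [wlen_gIdx] at hcon
  set k := (Nat.unpair j).1 with hk
  set m := (Nat.unpair j).2 with hm
  have h1 : r - 1 ≤ 2 * max k m := by
    rcases le_total k m with h | h
    · rw [max_eq_right h]; omega
    · rw [max_eq_left h]; omega
  have h2 : (r - 1) / 2 ≤ max k m := by
    calc (r - 1) / 2 ≤ 2 * max k m / 2 := Nat.div_le_div_right h1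
    _ = max k m := by omega
  have h3 := Nat.mul_le_mul h2 h2
  have h4 : max k m * max k m ≤ j := (sq_max_le_pair k m).trans_eq (Nat.pair_unpair j)
  omega

theorem mem_of_ball_eq {S S' : X 2} {r j : ℕ} (hb : ball S r = ball S' r)
    (hw : wlen (gIdx j) ≤ r) : gIdx j ∈ S.1 ↔ gIdx j ∈ S'.1 := by
  constructor <;> intro h
  · have h2 : gIdx j ∈ ball S r := ⟨h, hw⟩
    rw [hb] at h2; exact h2.1
  · have h2 : gIdx j ∈ ball S' r := ⟨h, hw⟩
    rw [← hb] at h2; exact h2.1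

open Classical in
/-- The Hölder map reading off the bits of a tree. -/
def fEmb (S : X 2) : ℝ := ∑' j : ℕ, if gIdx j ∈ S.1 then ((2 : ℝ)⁻¹) ^ (j + 1) else 0

theorem summable_geom_half : Summable (fun j : ℕ => ((2:ℝ)⁻¹) ^ j) :=
  summable_geometric_of_lt_one (by norm_num) (by norm_num)

theorem pow_half_succ_le (j : ℕ) : ((2:ℝ)⁻¹) ^ (j + 1) ≤ ((2:ℝ)⁻¹) ^ j := by
  calc ((2:ℝ)⁻¹) ^ (j+1) = ((2:ℝ)⁻¹) ^ j * 2⁻¹ := by rw [pow_succ]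
  _ ≤ ((2:ℝ)⁻¹) ^ j * 1 := by nlinarith [pow_nonneg (by norm_num : (0:ℝ) ≤ 2⁻¹) j]
  _ = ((2:ℝ)⁻¹) ^ j := mul_one _

open Classical in
theorem summable_ite (P : ℕ → Prop) :
    Summable (fun j => if P j then ((2 : ℝ)⁻¹) ^ (j + 1) else 0) := by
  refine Summable.of_nonneg_of_le (fun j => ?_) (fun j => ?_) summable_geom_half
  · split <;> positivity
  · split
    · exact pow_half_succ_le j
    · positivity

theorem tsum_pow_half_succ_le : (∑' j : ℕ, ((2:ℝ)⁻¹) ^ (j + 1)) ≤ 2 := by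
  have h := Summable.tsum_le_tsum (fun j => pow_half_succ_le j)
    (summable_geom_half.comp_injective (add_left_injective 1)) summable_geom_half
  rw [tsum_geometric_of_lt_one (by norm_num) (by norm_num)] at h
  calc (∑' j : ℕ, ((2:ℝ)⁻¹) ^ (j + 1)) ≤ (1 - 2⁻¹)⁻¹ := h
  _ = 2 := by norm_num

open Classical in
theorem abs_tsum_ite_le (P Q : ℕ → Prop) (q : ℕ) (hagree : ∀ j < q, (P j ↔ Q j)) :
    |(∑' j, if P j then ((2:ℝ)⁻¹) ^ (j + 1) else 0)
        - (∑' j, if Q j then ((2:ℝ)⁻¹) ^ (j + 1) else 0)|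
      ≤ 2 * ((2:ℝ)⁻¹) ^ q := by
  set a := fun j => if P j then ((2:ℝ)⁻¹) ^ (j + 1) else 0 with ha
  set b := fun j => if Q j then ((2:ℝ)⁻¹) ^ (j + 1) else 0 with hb
  set c := fun j => if j < q then (0:ℝ) else ((2:ℝ)⁻¹) ^ (j + 1) with hc
  have hsP : Summable a := summable_ite P
  have hsQ : Summable b := summable_ite Q
  have key : ∀ (R : ℕ → Prop) (j : ℕ), 0 ≤ (if R j then ((2:ℝ)⁻¹) ^ (j+1) else 0)
      ∧ (if R j then ((2:ℝ)⁻¹) ^ (j+1) else 0) ≤ ((2:ℝ)⁻¹) ^ (j+1) := by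
    intro R j
    constructor <;> split <;> first | positivity | norm_num
  have hdiff : ∀ j, |a j - b j| ≤ c j := by
    intro j
    by_cases hj : j < q
    · have hEq : a j = b j := by
        rw [ha, hb]; dsimp only; exact if_congr (hagree j hj) rfl rfl
      rw [hc]; dsimp only; rw [if_pos hj, hEq, sub_self, abs_zero]
    · rw [hc]; dsimp only; rw [if_neg hj]
      have h1 := key P j
      have h2 := key Q j
      rw [ha, hb]; dsimp only
      rw [abs_sub_le_iff]
      constructor <;> linarith [h1.1, h1.2, h2.1, h2.2]
  have hsc : Summable c := by
    refine Summable.of_nonneg_of_le (fun j => ?_) (fun j => ?_) summable_geom_half <;>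
      rw [hc] <;> dsimp only
    · split <;> first | positivity | norm_num
    · split
      · positivity
      · exact pow_half_succ_le j
  have hsupp : Function.support c ⊆ Set.range (fun j : ℕ => j + q) := by
    intro j hj
    rw [Function.mem_support, hc] at hj
    dsimp only at hj
    by_cases h : j < q
    · rw [if_pos h] at hj; exact absurd rfl hj
    · exact ⟨j - q, by dsimp only; omega⟩
  calc |(∑' j, a j) - (∑' j, b j)| = |∑' j, (a j - b j)| := by rw [Summable.tsum_sub hsP hsQ]
  _ ≤ ∑' j, |a j - b j| := by
      simpa using norm_tsum_le_tsum_norm (f := fun j => a j - b j)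
        (by simpa using (hsP.sub hsQ).abs)
  _ ≤ ∑' j, c j := Summable.tsum_le_tsum hdiff (hsP.sub hsQ).abs hsc
  _ = ∑' j, c (j + q) := (Function.Injective.tsum_eq (add_left_injective q) hsupp).symm
  _ = ∑' j, (((2:ℝ)⁻¹) ^ q * ((2:ℝ)⁻¹) ^ (j + 1)) := by
      refine tsum_congr fun j => ?_
      rw [hc]; dsimp only
      rw [if_neg (by omega), show j + q + 1 = q + (j + 1) by omega, pow_add]
  _ = ((2:ℝ)⁻¹) ^ q * ∑' j, ((2:ℝ)⁻¹) ^ (j + 1) := tsum_mul_left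
  _ ≤ ((2:ℝ)⁻¹) ^ q * 2 :=
      mul_le_mul_of_nonneg_left tsum_pow_half_succ_le (by positivity)
  _ = 2 * ((2:ℝ)⁻¹) ^ q := mul_comm _ _

open Classical in
theorem fEmb_XT (ω : ℕ → Bool) :
    fEmb (XT ω) = ∑' j : ℕ, if ω j = true then ((2:ℝ)⁻¹) ^ (j + 1) else 0 := by
  refine tsum_congr fun j => ?_
  exact if_congr (gIdx_mem_TSet ω j) rfl rfl

theorem numeric_key (N r : ℕ) :
    2 * ((2:ℝ)⁻¹) ^ ((r - 1) / 2 * ((r - 1) / 2)) ≤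
      (2 * Real.exp (2 * (N:ℝ) ^ 2 + 2 * N)) * Real.exp (-(N:ℝ) * r) := by
  set D : ℕ := (r - 1) / 2 with hD
  have h2D : ((r:ℝ)) - 2 ≤ 2 * (D:ℝ) := by
    have h : r ≤ 2 * D + 2 := by omega
    have h2 : (r:ℝ) ≤ ((2 * D + 2 : ℕ) : ℝ) := Nat.cast_le.2 h
    push_cast at h2
    linarith
  have hQR : (((D * D : ℕ)):ℝ) = (D:ℝ) * D := by push_cast; ring
  have hpow : ((2:ℝ)⁻¹) ^ (D * D) = Real.exp (-((D * D : ℕ):ℝ) * Real.log 2) := by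
    have h1 : ((2:ℝ)⁻¹) = Real.exp (-Real.log 2) := by
      rw [Real.exp_neg, Real.exp_log (by norm_num : (0:ℝ) < 2)]
    rw [h1, ← Real.exp_nat_mul]
    congr 1
    push_cast
    ring
  have hlog : (1:ℝ)/2 ≤ Real.log 2 := by linarith [Real.log_two_gt_d9]
  have hQnn : (0:ℝ) ≤ ((D * D : ℕ):ℝ) := Nat.cast_nonneg _
  have hmain : (N:ℝ) * r ≤ 2 * (N:ℝ) ^ 2 + 2 * N + ((D * D : ℕ):ℝ) / 2 := by
    rcases le_or_gt r 2 with h | h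
    · have hr : (r:ℝ) ≤ 2 := by exact_mod_cast h
      nlinarith [(Nat.cast_nonneg N : (0:ℝ) ≤ (N:ℝ)), hQnn, (Nat.cast_nonneg r : (0:ℝ) ≤ (r:ℝ))]
    · have hr2 : (0:ℝ) ≤ (r:ℝ) - 2 := by
        have : (2:ℝ) ≤ (r:ℝ) := by exact_mod_cast h.le
        linarith
      have hQge : ((r:ℝ) - 2) ^ 2 / 4 ≤ ((D * D : ℕ):ℝ) := by
        rw [hQR]
        nlinarith [h2D, hr2, (Nat.cast_nonneg D : (0:ℝ) ≤ (D:ℝ))]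
      nlinarith [sq_nonneg ((r:ℝ) - 2 - 4 * N), hQge]
  have hexp : Real.exp (-((D * D : ℕ):ℝ) * Real.log 2)
      ≤ Real.exp ((2 * (N:ℝ) ^ 2 + 2 * N) + (-(N:ℝ) * r)) := by
    rw [Real.exp_le_exp]
    nlinarith [hlog, hQnn, hmain]
  calc 2 * ((2:ℝ)⁻¹) ^ (D * D)
      = 2 * Real.exp (-((D * D : ℕ):ℝ) * Real.log 2) := by rw [hpow]
  _ ≤ 2 * Real.exp ((2 * (N:ℝ) ^ 2 + 2 * N) + (-(N:ℝ) * r)) := by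
      nlinarith [hexp]
  _ = (2 * Real.exp (2 * (N:ℝ) ^ 2 + 2 * N)) * Real.exp (-(N:ℝ) * r) := by
      rw [Real.exp_add]; ring

theorem fEmb_holder (N : ℕ) :
    HolderOnWith (2 * Real.exp (2 * (N:ℝ) ^ 2 + 2 * N)).toNNReal ((N : NNReal)) fEmb Ztri := by
  intro S _ S' _
  rcases eq_or_ne S S' with rfl | hne
  · simp
  · set r := sSup (agreeSet S S') with hr
    have hball : ball S r = ball S' r :=
      Nat.sSup_mem ⟨0, zero_mem_agreeSet S S'⟩ (bddAbove_agreeSet hne)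
    have hbits : ∀ j < (r - 1) / 2 * ((r - 1) / 2), (gIdx j ∈ S.1 ↔ gIdx j ∈ S'.1) :=
      fun j hj => mem_of_ball_eq hball (wlen_gIdx_le hj)
    have habs : |fEmb S - fEmb S'| ≤ 2 * ((2:ℝ)⁻¹) ^ ((r - 1) / 2 * ((r - 1) / 2)) :=
      abs_tsum_ite_le _ _ _ hbits
    have hd : dist S S' = Real.exp (-(r:ℝ)) := tdist_eq_of_ne hne
    have hC0 : (0:ℝ) ≤ 2 * Real.exp (2 * (N:ℝ) ^ 2 + 2 * N) := by positivity
    calc edist (fEmb S) (fEmb S') = ENNReal.ofReal |fEmb S - fEmb S'| := by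
          rw [edist_dist, Real.dist_eq]
    _ ≤ ENNReal.ofReal ((2 * Real.exp (2 * (N:ℝ) ^ 2 + 2 * N)) * Real.exp (-(N:ℝ) * r)) :=
          ENNReal.ofReal_le_ofReal (habs.trans (numeric_key N r))
    _ = ENNReal.ofReal (2 * Real.exp (2 * (N:ℝ) ^ 2 + 2 * N))
          * ENNReal.ofReal (Real.exp (-(N:ℝ) * r)) := ENNReal.ofReal_mul hC0
    _ = ((2 * Real.exp (2 * (N:ℝ) ^ 2 + 2 * N)).toNNReal : ℝ≥0∞)
          * edist S S' ^ (((N : NNReal)) : ℝ) := by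
          have hpowstep : edist S S' ^ (((N : NNReal)) : ℝ)
              = ENNReal.ofReal (Real.exp (-(N:ℝ) * r)) := by
            rw [edist_dist, hd, NNReal.coe_natCast,
              ENNReal.ofReal_rpow_of_pos (Real.exp_pos _), Real.rpow_natCast,
              ← Real.exp_nat_mul]
            ring_nf
          rw [hpowstep]
          congr 1

theorem tsum_half_succ : ∑' j : ℕ, ((2:ℝ)⁻¹) ^ (j + 1) = 1 := by
  have h : ∀ j : ℕ, ((2:ℝ)⁻¹) ^ (j + 1) = 2⁻¹ * (2⁻¹) ^ j := fun j => by
    rw [pow_succ]; ring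
  rw [tsum_congr h, tsum_mul_left, tsum_geometric_of_lt_one (by norm_num) (by norm_num)]
  norm_num

/-- The `j`-th binary digit of `x`. -/
def dig (x : ℝ) (j : ℕ) : Bool := decide (⌊x * 2 ^ (j + 1)⌋ - 2 * ⌊x * 2 ^ j⌋ = 1)

theorem dig_cases (x : ℝ) (j : ℕ) :
    ⌊x * 2 ^ (j + 1)⌋ - 2 * ⌊x * 2 ^ j⌋ = 0 ∨ ⌊x * 2 ^ (j + 1)⌋ - 2 * ⌊x * 2 ^ j⌋ = 1 := by
  have h1 : 2 * ⌊x * 2 ^ j⌋ ≤ ⌊x * 2 ^ (j + 1)⌋ := by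
    rw [Int.le_floor]
    push_cast
    rw [pow_succ]
    nlinarith [Int.floor_le (x * 2 ^ j)]
  have h2 : ⌊x * 2 ^ (j + 1)⌋ ≤ 2 * ⌊x * 2 ^ j⌋ + 1 := by
    rw [Int.floor_le_iff]
    push_cast
    rw [pow_succ]
    nlinarith [Int.lt_floor_add_one (x * 2 ^ j)]
  omega

theorem partial_dig {x : ℝ} (hx0 : 0 ≤ x) (hx1 : x < 1) (n : ℕ) :
    ∑ j ∈ Finset.range n, (if dig x j = true then ((2:ℝ)⁻¹) ^ (j + 1) else 0)
      = (⌊x * 2 ^ n⌋ : ℝ) / 2 ^ n := by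
  induction n with
  | zero =>
    rw [Finset.sum_range_zero, pow_zero, mul_one,
      Int.floor_eq_zero_iff.2 ⟨hx0, hx1⟩]
    norm_num
  | succ n ih =>
    rw [Finset.sum_range_succ, ih]
    rcases dig_cases x n with h | h
    · have h2 : ⌊x * 2 ^ (n + 1)⌋ = 2 * ⌊x * 2 ^ n⌋ := by omega
      rw [if_neg (by simp [dig, h]), add_zero, h2]
      push_cast
      rw [pow_succ]
      field_simp
    · have h2 : ⌊x * 2 ^ (n + 1)⌋ = 2 * ⌊x * 2 ^ n⌋ + 1 := by omega
      rw [if_pos (by simp [dig, h]), h2]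
      push_cast
      rw [pow_succ, inv_pow]
      field_simp
      ring

theorem tendsto_floor_div (x : ℝ) :
    Filter.Tendsto (fun n : ℕ => (⌊x * 2 ^ n⌋ : ℝ) / 2 ^ n) Filter.atTop (nhds x) := by
  have hge : ∀ n : ℕ, x - ((2:ℝ)⁻¹) ^ n ≤ (⌊x * 2 ^ n⌋ : ℝ) / 2 ^ n := by
    intro n
    rw [le_div_iff₀ (by positivity : (0:ℝ) < 2 ^ n)]
    have h1 : x * 2 ^ n - 1 ≤ (⌊x * 2 ^ n⌋ : ℝ) := by
      linarith [Int.lt_floor_add_one (x * 2 ^ n)]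
    have h2 : ((2:ℝ)⁻¹) ^ n * 2 ^ n = 1 := by
      rw [← mul_pow]
      norm_num
    nlinarith [h2]
  have hle : ∀ n : ℕ, (⌊x * 2 ^ n⌋ : ℝ) / 2 ^ n ≤ x := by
    intro n
    rw [div_le_iff₀ (by positivity : (0:ℝ) < 2 ^ n)]
    exact Int.floor_le _
  have hlow : Filter.Tendsto (fun n : ℕ => x - ((2:ℝ)⁻¹) ^ n) Filter.atTop (nhds x) := by
    have := tendsto_const_nhds (x := x) (f := Filter.atTop (α := ℕ)).sub
      (tendsto_pow_atTop_nhds_zero_of_lt_one (by norm_num : (0:ℝ) ≤ 2⁻¹) (by norm_num))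
    simpa using this
  exact tendsto_of_tendsto_of_tendsto_of_le_of_le hlow tendsto_const_nhds hge hle

theorem hasSum_dig {x : ℝ} (hx0 : 0 ≤ x) (hx1 : x < 1) :
    HasSum (fun j => if dig x j = true then ((2:ℝ)⁻¹) ^ (j + 1) else 0) x := by
  rw [hasSum_iff_tendsto_nat_of_nonneg (fun i => by split <;> norm_num) x]
  exact Filter.Tendsto.congr (fun n => (partial_dig hx0 hx1 n).symm) (tendsto_floor_div x)

theorem Icc_subset_image : Set.Icc (0:ℝ) 1 ⊆ fEmb '' Ztri := by
  rintro x ⟨hx0, hx1⟩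
  rcases eq_or_lt_of_le hx1 with heq | hlt
  · refine ⟨XT (fun _ => true), XT_mem_Ztri _, ?_⟩
    rw [fEmb_XT, tsum_congr (fun j => if_pos rfl), tsum_half_succ, heq]
  · refine ⟨XT (dig x), XT_mem_Ztri _, ?_⟩
    rw [fEmb_XT]
    exact (hasSum_dig hx0 hlt).tsum_eq

theorem dimH_Icc01 : dimH (Set.Icc (0:ℝ) 1) = 1 := by
  rw [Real.dimH_of_nonempty_interior (by rw [interior_Icc]; exact ⟨1/2, by norm_num⟩)]
  simp

/-- The set of trivalent trees in `(X_2, d_2)` has infinite Hausdorff dimension. -/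
theorem dimH_trivalent_eq_top : dimH Ztri = ⊤ := by
  by_contra hne
  obtain ⟨N, hN⟩ := ENNReal.exists_nat_gt hne
  have hH := fEmb_holder (N + 1)
  have hpos : (0 : NNReal) < (((N + 1 : ℕ)) : NNReal) := by
    exact_mod_cast Nat.succ_pos N
  have h1 : dimH (fEmb '' Ztri) ≤ dimH Ztri / ((((N + 1 : ℕ)) : NNReal) : ℝ≥0∞) :=
    hH.dimH_image_le hpos
  have h2 : (1 : ℝ≥0∞) ≤ dimH Ztri / ((((N + 1 : ℕ)) : NNReal) : ℝ≥0∞) := by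
    calc (1 : ℝ≥0∞) = dimH (Set.Icc (0:ℝ) 1) := dimH_Icc01.symm
    _ ≤ dimH (fEmb '' Ztri) := dimH_mono Icc_subset_image
    _ ≤ _ := h1
  have h3 : ((((N + 1 : ℕ)) : NNReal) : ℝ≥0∞) ≤ dimH Ztri := by
    have h4 := (ENNReal.le_div_iff_mul_le
      (Or.inl (by exact_mod_cast hpos.ne'))
      (Or.inl ENNReal.coe_ne_top)).1 h2
    simpa using h4
  have h5 : (N : ℝ≥0∞) ≤ dimH Ztri :=
    le_trans (by exact_mod_cast Nat.le_succ N) h3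
  exact absurd hN (not_lt.2 h5)

end GraphTrees
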